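/- Let d be a positive natural number, let ρ be a density matrix on ℂ² ⊗ ℂ^d, let V_A be a 2 × 2 unitary matrix and V_B a d × d unitary matrix, and set ρ' = (V_A ⊗ₖ V_B) ρ (V_A ⊗ₖ V_B)ᴴ. Then the supremum over all traceless 2 × 2 unitary matrices U of √F(ρ', (U ⊗ₖ I_d) ρ' (U ⊗ₖ I_d)ᴴ) equals the supremum over all traceless 2 × 2 unitary matrices U of √F(ρ, (U ⊗ₖ I_d) ρ (U ⊗ₖ I_d)ᴴ); that is, the Bures discord of response is invariant under local unitary transformations of the state. -/

import Mathlib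

open Matrix Kronecker
open scoped ComplexOrder

open scoped Classical in
/-- The positive semidefinite square root of a matrix (junk value `0` if not PSD). -/
noncomputable def msqrt {n : Type*} [Fintype n] [DecidableEq n] (A : Matrix n n ℂ) : Matrix n n ℂ :=
  if h : A.PosSemidef then
    (h.1.eigenvectorUnitary : Matrix n n ℂ) * diagonal ((↑) ∘ (√·) ∘ h.1.eigenvalues) *
      (star h.1.eigenvectorUnitary : Matrix n n ℂ)
  else 0

/-- Square-root fidelity `tr √(√ρ · σ · √ρ)` (as a real number). -/
noncomputable def sqrtFid {n : Type*} [Fintype n] [DecidableEq n] (ρ σ : Matrix n n ℂ) : ℝ :=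
  ((msqrt (msqrt ρ * σ * msqrt ρ)).trace).re

/-- Trace norm `tr √(Xᴴ X)` (as a real number). -/
noncomputable def traceNorm {n : Type*} [Fintype n] [DecidableEq n] (X : Matrix n n ℂ) : ℝ :=
  ((msqrt (Xᴴ * X)).trace).re

/-- The Bell-diagonal two-qubit state with Bell-basis eigenvalues `γ₁, γ₂, γ₃, γ₄`. -/
noncomputable def bellDiag (γ₁ γ₂ γ₃ γ₄ : ℝ) :
    Matrix (Fin 2 × Fin 2) (Fin 2 × Fin 2) ℂ :=
  Matrix.reindex finProdFinEquiv.symm finProdFinEquiv.symm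
    ((1 / 2 : ℂ) • !![(γ₁ : ℂ) + γ₂, 0, 0, (γ₁ : ℂ) - γ₂;
        0, (γ₃ : ℂ) + γ₄, (γ₃ : ℂ) - γ₄, 0;
        0, (γ₃ : ℂ) - γ₄, (γ₃ : ℂ) + γ₄, 0;
        (γ₁ : ℂ) - γ₂, 0, 0, (γ₁ : ℂ) + γ₂])

/-- The explicit spectral square root of a positive semidefinite matrix. -/
noncomputable def Matrix.PosSemidef.sqrt {n : Type*} [Fintype n] [DecidableEq n]
    {A : Matrix n n ℂ} (h : A.PosSemidef) : Matrix n n ℂ :=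
  (h.1.eigenvectorUnitary : Matrix n n ℂ) * diagonal ((↑) ∘ (√·) ∘ h.1.eigenvalues) *
    (star h.1.eigenvectorUnitary : Matrix n n ℂ)

open scoped MatrixOrder in
lemma Matrix.PosSemidef.sqrt_eq_cfc {n : Type*} [Fintype n] [DecidableEq n]
    {A : Matrix n n ℂ} (h : A.PosSemidef) : h.sqrt = CFC.sqrt A := by
  rw [CFC.sqrt_eq_cfc, cfc_nnreal_eq_real _ A, h.1.cfc_eq]
  simp only [Matrix.PosSemidef.sqrt, IsHermitian.cfc, Unitary.conjStarAlgAut_apply]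
  congr 3
  funext i
  simp [max_eq_left (h.eigenvalues_nonneg i)]

open scoped MatrixOrder in
lemma Matrix.PosSemidef.posSemidef_sqrt {n : Type*} [Fintype n] [DecidableEq n]
    {A : Matrix n n ℂ} (h : A.PosSemidef) : h.sqrt.PosSemidef := by
  rw [h.sqrt_eq_cfc]
  exact (CFC.sqrt_nonneg A).posSemidef

open scoped MatrixOrder in
lemma Matrix.PosSemidef.sqrt_mul_self {n : Type*} [Fintype n] [DecidableEq n]
    {A : Matrix n n ℂ} (h : A.PosSemidef) : h.sqrt * h.sqrt = A := by
  rw [h.sqrt_eq_cfc]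
  exact CFC.sqrt_mul_sqrt_self A h.nonneg

open scoped MatrixOrder in
lemma Matrix.PosSemidef.eq_sqrt_of_sq_eq {n : Type*} [Fintype n] [DecidableEq n]
    {A B : Matrix n n ℂ} (hB : B.PosSemidef) (hA : A.PosSemidef) (hsq : B ^ 2 = A) :
    B = hA.sqrt := by
  rw [hA.sqrt_eq_cfc]
  exact (CFC.sqrt_unique (by rw [← pow_two]; exact hsq) hB.nonneg).symm

lemma kron_conjTranspose {l m n p : Type*} (A : Matrix l m ℂ) (B : Matrix n p ℂ) :
    (A ⊗ₖ B)ᴴ = Aᴴ ⊗ₖ Bᴴ := by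
  ext ⟨i, j⟩ ⟨k, l⟩
  simp [Matrix.conjTranspose_apply, Matrix.kroneckerMap_apply, mul_comm]

lemma msqrt_conj {n : Type*} [Fintype n] [DecidableEq n] (W A : Matrix n n ℂ)
    (hW : Wᴴ * W = 1) : msqrt (W * A * Wᴴ) = W * msqrt A * Wᴴ := by
  have hW' : W * Wᴴ = 1 := mul_eq_one_comm.mp hW
  by_cases hA : A.PosSemidef
  · have h1 : (W * A * Wᴴ).PosSemidef := by
      have := hA.mul_mul_conjTranspose_same W
      simpa [Matrix.mul_assoc] using this
    have h2 : (W * hA.sqrt * Wᴴ).PosSemidef := by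
      have := hA.posSemidef_sqrt.mul_mul_conjTranspose_same W
      simpa [Matrix.mul_assoc] using this
    have hsq : (W * hA.sqrt * Wᴴ) ^ 2 = W * A * Wᴴ := by
      rw [pow_two]
      calc W * hA.sqrt * Wᴴ * (W * hA.sqrt * Wᴴ)
          = W * (hA.sqrt * (Wᴴ * W) * hA.sqrt) * Wᴴ := by
            simp only [Matrix.mul_assoc]
        _ = W * A * Wᴴ := by rw [hW, Matrix.mul_one, hA.sqrt_mul_self]
    have := h2.eq_sqrt_of_sq_eq h1 hsq
    simp only [msqrt, dif_pos h1, dif_pos hA]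
    exact this.symm
  · have hA' : ¬ (W * A * Wᴴ).PosSemidef := by
      intro h
      have := h.mul_mul_conjTranspose_same Wᴴ
      have heq : Wᴴ * (W * A * Wᴴ) * Wᴴᴴ = A := by
        rw [Matrix.conjTranspose_conjTranspose]
        calc Wᴴ * (W * A * Wᴴ) * W = (Wᴴ * W) * A * (Wᴴ * W) := by
              simp only [Matrix.mul_assoc]
          _ = A := by rw [hW]; simp
      rw [heq] at this
      exact hA this
    simp only [msqrt, dif_neg hA, dif_neg hA']
    simp

lemma sqrtFid_conj {n : Type*} [Fintype n] [DecidableEq n] (W ρ σ : Matrix n n ℂ)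
    (hW : Wᴴ * W = 1) :
    sqrtFid (W * ρ * Wᴴ) (W * σ * Wᴴ) = sqrtFid ρ σ := by
  have hW' : W * Wᴴ = 1 := mul_eq_one_comm.mp hW
  unfold sqrtFid
  rw [msqrt_conj W ρ hW]
  have key : W * msqrt ρ * Wᴴ * (W * σ * Wᴴ) * (W * msqrt ρ * Wᴴ)
      = W * (msqrt ρ * σ * msqrt ρ) * Wᴴ := by
    calc W * msqrt ρ * Wᴴ * (W * σ * Wᴴ) * (W * msqrt ρ * Wᴴ)
        = W * (msqrt ρ * (Wᴴ * W) * σ * (Wᴴ * W) * msqrt ρ) * Wᴴ := by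
          simp only [Matrix.mul_assoc]
      _ = _ := by rw [hW]; simp [Matrix.mul_assoc]
  rw [key, msqrt_conj W _ hW]
  rw [Matrix.trace_mul_cycle, hW, Matrix.one_mul]

lemma unit_conj_unit {n : Type*} [Fintype n] [DecidableEq n] {V U : Matrix n n ℂ}
    (hV : Vᴴ * V = 1) (hU : Uᴴ * U = 1) : (Vᴴ * U * V)ᴴ * (Vᴴ * U * V) = 1 := by
  have hV' : V * Vᴴ = 1 := mul_eq_one_comm.mp hV
  calc (Vᴴ * U * V)ᴴ * (Vᴴ * U * V)
      = Vᴴ * (Uᴴ * (V * Vᴴ) * U) * V := by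
        simp only [Matrix.conjTranspose_mul, Matrix.conjTranspose_conjTranspose,
          Matrix.mul_assoc]
    _ = Vᴴ * (Uᴴ * U) * V := by rw [hV', Matrix.mul_one]
    _ = 1 := by rw [hU, Matrix.mul_one, hV]

lemma key_fid (d : ℕ) (ρ : Matrix (Fin 2 × Fin d) (Fin 2 × Fin d) ℂ)
    (VA : Matrix (Fin 2) (Fin 2) ℂ) (hVA : VAᴴ * VA = 1)
    (VB : Matrix (Fin d) (Fin d) ℂ) (hVB : VBᴴ * VB = 1)
    (U : Matrix (Fin 2) (Fin 2) ℂ) :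
    sqrtFid ((VA ⊗ₖ VB) * ρ * (VA ⊗ₖ VB)ᴴ)
      ((U ⊗ₖ (1 : Matrix (Fin d) (Fin d) ℂ)) * ((VA ⊗ₖ VB) * ρ * (VA ⊗ₖ VB)ᴴ) *
        (U ⊗ₖ (1 : Matrix (Fin d) (Fin d) ℂ))ᴴ)
    = sqrtFid ρ
      (((VAᴴ * U * VA) ⊗ₖ (1 : Matrix (Fin d) (Fin d) ℂ)) * ρ *
        ((VAᴴ * U * VA) ⊗ₖ (1 : Matrix (Fin d) (Fin d) ℂ))ᴴ) := by
  have hVA' : VA * VAᴴ = 1 := mul_eq_one_comm.mp hVA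
  set W := VA ⊗ₖ VB with hW
  have hWu : Wᴴ * W = 1 := by
    rw [hW, kron_conjTranspose, ← Matrix.mul_kronecker_mul, hVA, hVB,
      Matrix.one_kronecker_one]
  set U' := VAᴴ * U * VA with hU'
  have hcomm : (U ⊗ₖ (1 : Matrix (Fin d) (Fin d) ℂ)) * W
      = W * (U' ⊗ₖ (1 : Matrix (Fin d) (Fin d) ℂ)) := by
    have hUVA : U * VA = VA * (VAᴴ * U * VA) := by
      calc U * VA = (VA * VAᴴ) * U * VA := by rw [hVA']; simp
        _ = VA * (VAᴴ * U * VA) := by simp only [Matrix.mul_assoc]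
    rw [hW, ← Matrix.mul_kronecker_mul, ← Matrix.mul_kronecker_mul, Matrix.one_mul,
      Matrix.mul_one, hU', hUVA]
  have hσ : (U ⊗ₖ (1 : Matrix (Fin d) (Fin d) ℂ)) * (W * ρ * Wᴴ) *
      (U ⊗ₖ (1 : Matrix (Fin d) (Fin d) ℂ))ᴴ
      = W * ((U' ⊗ₖ (1 : Matrix (Fin d) (Fin d) ℂ)) * ρ *
          (U' ⊗ₖ (1 : Matrix (Fin d) (Fin d) ℂ))ᴴ) * Wᴴ := by
    calc (U ⊗ₖ (1 : Matrix (Fin d) (Fin d) ℂ)) * (W * ρ * Wᴴ) *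
          (U ⊗ₖ (1 : Matrix (Fin d) (Fin d) ℂ))ᴴ
        = ((U ⊗ₖ (1 : Matrix (Fin d) (Fin d) ℂ)) * W) * ρ *
            ((U ⊗ₖ (1 : Matrix (Fin d) (Fin d) ℂ)) * W)ᴴ := by
          simp only [Matrix.conjTranspose_mul, Matrix.mul_assoc]
      _ = (W * (U' ⊗ₖ (1 : Matrix (Fin d) (Fin d) ℂ))) * ρ *
            (W * (U' ⊗ₖ (1 : Matrix (Fin d) (Fin d) ℂ)))ᴴ := by rw [hcomm]
      _ = _ := by simp only [Matrix.conjTranspose_mul, Matrix.mul_assoc]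
  rw [hσ, sqrtFid_conj W _ _ hWu]

set_option maxHeartbeats 2000000 in
theorem discord_of_response_local_unitary_invariance
    (d : ℕ) (hd : 0 < d)
    (ρ : Matrix (Fin 2 × Fin d) (Fin 2 × Fin d) ℂ)
    (hρ : ρ.PosSemidef) (htr : ρ.trace = 1)
    (VA : Matrix (Fin 2) (Fin 2) ℂ) (hVA : VAᴴ * VA = 1)
    (VB : Matrix (Fin d) (Fin d) ℂ) (hVB : VBᴴ * VB = 1) :
    sSup {r : ℝ | ∃ U : Matrix (Fin 2) (Fin 2) ℂ, Uᴴ * U = 1 ∧ U.trace = 0 ∧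
        r = sqrtFid ((VA ⊗ₖ VB) * ρ * (VA ⊗ₖ VB)ᴴ)
          ((U ⊗ₖ (1 : Matrix (Fin d) (Fin d) ℂ)) * ((VA ⊗ₖ VB) * ρ * (VA ⊗ₖ VB)ᴴ) *
            (U ⊗ₖ (1 : Matrix (Fin d) (Fin d) ℂ))ᴴ)}
      = sSup {r : ℝ | ∃ U : Matrix (Fin 2) (Fin 2) ℂ, Uᴴ * U = 1 ∧ U.trace = 0 ∧
        r = sqrtFid ρ
          ((U ⊗ₖ (1 : Matrix (Fin d) (Fin d) ℂ)) * ρ *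
            (U ⊗ₖ (1 : Matrix (Fin d) (Fin d) ℂ))ᴴ)} := by
  refine congrArg sSup (Set.ext fun r => ?_)
  simp only [Set.mem_setOf_eq]
  have hVA' : VA * VAᴴ = 1 := mul_eq_one_comm.mp hVA
  constructor
  · rintro ⟨U, hU, htrU, rfl⟩
    refine ⟨VAᴴ * U * VA, unit_conj_unit hVA hU, ?_, ?_⟩
    · rw [Matrix.trace_mul_cycle, hVA', Matrix.one_mul, htrU]
    · rw [key_fid d ρ VA hVA VB hVB U]
  · rintro ⟨U, hU, htrU, rfl⟩
    refine ⟨VA * U * VAᴴ, ?_, ?_, ?_⟩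
    · have h1 := unit_conj_unit (V := VAᴴ) (by simpa using hVA') hU
      simpa using h1
    · rw [Matrix.trace_mul_cycle, hVA, Matrix.one_mul, htrU]
    · rw [key_fid d ρ VA hVA VB hVB (VA * U * VAᴴ)]
      have : VAᴴ * (VA * U * VAᴴ) * VA = U := by
        calc VAᴴ * (VA * U * VAᴴ) * VA = (VAᴴ * VA) * U * (VAᴴ * VA) := by
              simp only [Matrix.mul_assoc]
          _ = U := by rw [hVA]; simp
      rw [this]
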